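/- Let W be a Bernoulli random walk with parameter p_W, 0 ≤ p_W ≤ 1/2. Then the first-passage probabilities converge: lim_{t→∞} P(W_t ≠ W_s for all 0 ≤ s < t) = 1 − 2·p_W. -/

import Mathlib

open MeasureTheory ProbabilityTheory Filter


namespace FPAux

open Finset

/-- Discrete IVT for ±1 step walks. -/
lemma discrete_ivt (g : ℕ → ℤ) (hg : ∀ k, g (k+1) = g k + 1 ∨ g (k+1) = g k - 1)
    (c : ℤ) : ∀ b a, a ≤ b → g a ≤ c → c ≤ g b → ∃ k, a ≤ k ∧ k ≤ b ∧ g k = c := by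
  intro b
  induction b with
  | zero =>
    intro a ha h1 h2
    interval_cases a
    exact ⟨0, le_refl 0, le_refl 0, le_antisymm h1 h2⟩
  | succ b ih =>
    intro a ha h1 h2
    rcases Nat.lt_or_ge a (b+1) with hab | hab
    · by_cases hc : c ≤ g b
      · obtain ⟨k, hk1, hk2, hk3⟩ := ih a (Nat.lt_succ_iff.mp hab) h1 hc
        exact ⟨k, hk1, hk2.trans (Nat.le_succ b), hk3⟩
      · push_neg at hc
        have : g (b+1) = c := by
          rcases hg b with h | h <;> omega
        exact ⟨b+1, ha, le_refl _, this⟩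
    · have : a = b + 1 := le_antisymm ha hab
      subst this
      exact ⟨b+1, le_refl _, le_refl _, le_antisymm h1 h2⟩

def gsum (u : ℕ → ℤ) (k : ℕ) : ℤ := ∑ j ∈ Finset.range k, u j

lemma gsum_succ (u : ℕ → ℤ) (k : ℕ) : gsum u (k+1) = gsum u k + u k :=
  Finset.sum_range_succ u k

lemma gsum_steps (u : ℕ → ℤ) (hu : ∀ k, u k = 1 ∨ u k = -1) (k : ℕ) :
    gsum u (k+1) = gsum u k + 1 ∨ gsum u (k+1) = gsum u k - 1 := by
  rcases hu k with h | h <;> rw [gsum_succ, h] <;> simp [sub_eq_add_neg]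

lemma gsum_periodic (t : ℕ) (u : ℕ → ℤ) (hper : ∀ k, u (k + t) = u k) (k : ℕ) :
    gsum u (k + t) = gsum u k + gsum u t := by
  induction k with
  | zero => simp [gsum]
  | succ k ih =>
    have : k + 1 + t = (k + t) + 1 := by omega
    rw [this, gsum_succ, ih, hper, gsum_succ]
    ring

lemma gsum_Ico (u : ℕ → ℤ) {a b : ℕ} (h : a ≤ b) :
    ∑ j ∈ Finset.Ico a b, u j = gsum u b - gsum u a := by
  rw [gsum, gsum, eq_sub_iff_add_eq, ← Finset.sum_range_add_sum_Ico u h]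
  ring

end FPAux

namespace FPAux

open Finset

noncomputable def mwin (t : ℕ) (ht : 0 < t) (u : ℕ → ℤ) (k : ℕ) : ℤ :=
  (Finset.Ico k (k+t)).sup' (by rw [Finset.nonempty_Ico]; omega) (gsum u)

lemma le_mwin (t : ℕ) (ht : 0 < t) (u : ℕ → ℤ) {k j : ℕ} (hj : j ∈ Finset.Ico k (k+t)) :
    gsum u j ≤ mwin t ht u k := Finset.le_sup' _ hj

lemma mwin_le (t : ℕ) (ht : 0 < t) (u : ℕ → ℤ) {k : ℕ} {c : ℤ}
    (h : ∀ j ∈ Finset.Ico k (k+t), gsum u j ≤ c) : mwin t ht u k ≤ c :=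
  Finset.sup'_le _ _ h

lemma exists_mwin (t : ℕ) (ht : 0 < t) (u : ℕ → ℤ) (k : ℕ) :
    ∃ j ∈ Finset.Ico k (k+t), mwin t ht u k = gsum u j :=
  Finset.exists_mem_eq_sup' _ _

lemma mwin_succ_record (t : ℕ) (ht : 0 < t) (u : ℕ → ℤ)
    (hu : ∀ k, u k = 1 ∨ u k = -1) (k : ℕ)
    (h : mwin t ht u k < gsum u (k+t)) :
    mwin t ht u (k+1) = mwin t ht u k + 1 := by
  have hmem : k + t - 1 ∈ Finset.Ico k (k+t) := by
    rw [Finset.mem_Ico]; omega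
  have h1 : gsum u (k+t-1) ≤ mwin t ht u k := le_mwin t ht u hmem
  have hstep := gsum_steps u hu (k+t-1)
  have hkk : k + t - 1 + 1 = k + t := by omega
  rw [hkk] at hstep
  have heq : gsum u (k+t) = mwin t ht u k + 1 := by omega
  rw [← heq]
  apply le_antisymm
  · apply mwin_le
    intro j hj
    rw [Finset.mem_Ico] at hj
    rcases Nat.lt_or_ge j (k+t) with hjlt | hjge
    · have : j ∈ Finset.Ico k (k+t) := by rw [Finset.mem_Ico]; omega
      exact le_of_lt (lt_of_le_of_lt (le_mwin t ht u this) h)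
    · have : j = k + t := by omega
      rw [this]
  · apply le_mwin
    rw [Finset.mem_Ico]; omega

lemma mwin_succ_norecord (t : ℕ) (ht : 0 < t) (u : ℕ → ℤ)
    (hm : 0 < gsum u t) (hper : ∀ k, u (k + t) = u k) (k : ℕ)
    (h : ¬ mwin t ht u k < gsum u (k+t)) :
    mwin t ht u (k+1) = mwin t ht u k := by
  push_neg at h
  apply le_antisymm
  · apply mwin_le
    intro j hj
    rw [Finset.mem_Ico] at hj
    rcases Nat.lt_or_ge j (k+t) with hjlt | hjge
    · exact le_mwin t ht u (by rw [Finset.mem_Ico]; omega)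
    · have : j = k + t := by omega
      rw [this]; exact h
  · obtain ⟨j0, hj0, hj0e⟩ := exists_mwin t ht u k
    rw [Finset.mem_Ico] at hj0
    rcases Nat.lt_or_ge j0 (k+1) with hj0k | hj0k
    · have hj0k' : j0 = k := by omega
      have hgk : gsum u (k+t) = gsum u k + gsum u t := gsum_periodic t u hper k
      have h1 : gsum u k < gsum u (k+t) := by omega
      have h2 : gsum u (k+t) ≤ mwin t ht u (k+1) :=
        le_mwin t ht u (by rw [Finset.mem_Ico]; omega)
      rw [hj0e, hj0k']; omega
    · rw [hj0e]
      exact le_mwin t ht u (by rw [Finset.mem_Ico]; omega)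

lemma mwin_t (t : ℕ) (ht : 0 < t) (u : ℕ → ℤ) (hper : ∀ k, u (k + t) = u k) :
    mwin t ht u t = mwin t ht u 0 + gsum u t := by
  apply le_antisymm
  · apply mwin_le
    intro j hj
    rw [Finset.mem_Ico] at hj
    have hj' : j = (j - t) + t := by omega
    have : gsum u j = gsum u (j - t) + gsum u t := by
      have h2 := gsum_periodic t u hper (j - t)
      rw [← hj'] at h2; exact h2
    have hmem : j - t ∈ Finset.Ico 0 (0+t) := by rw [Finset.mem_Ico]; omega
    have := le_mwin t ht u hmem
    omega
  · obtain ⟨j0, hj0, hj0e⟩ := exists_mwin t ht u 0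
    rw [Finset.mem_Ico] at hj0
    have hgp : gsum u (j0 + t) = gsum u j0 + gsum u t := gsum_periodic t u hper j0
    have hmem : j0 + t ∈ Finset.Ico t (t+t) := by rw [Finset.mem_Ico]; omega
    have := le_mwin t ht u hmem
    omega

lemma count_records (t : ℕ) (ht : 0 < t) (u : ℕ → ℤ)
    (hu : ∀ k, u k = 1 ∨ u k = -1) (hper : ∀ k, u (k + t) = u k)
    (hm : 0 < gsum u t) (k : ℕ) :
    (((Finset.range k).filter
      (fun r => ∀ j ∈ Finset.Ico r (r+t), gsum u j < gsum u (r+t))).card : ℤ)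
      = mwin t ht u k - mwin t ht u 0 := by
  induction k with
  | zero => simp
  | succ k ih =>
    rw [Finset.range_add_one, Finset.filter_insert]
    by_cases hrec : ∀ j ∈ Finset.Ico k (k+t), gsum u j < gsum u (k+t)
    · rw [if_pos hrec, Finset.card_insert_of_notMem (by simp)]
      have hlt : mwin t ht u k < gsum u (k+t) := by
        obtain ⟨j0, hj0, hj0e⟩ := exists_mwin t ht u k
        rw [hj0e]; exact hrec j0 hj0
      rw [mwin_succ_record t ht u hu k hlt]
      push_cast
      omega
    · rw [if_neg hrec]
      have hnlt : ¬ mwin t ht u k < gsum u (k+t) := by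
        intro hlt
        apply hrec
        intro j hj
        exact lt_of_le_of_lt (le_mwin t ht u hj) hlt
      rw [mwin_succ_norecord t ht u hm hper k hnlt, ih]

lemma cycle_count_pos (t : ℕ) (ht : 0 < t) (u : ℕ → ℤ)
    (hu : ∀ k, u k = 1 ∨ u k = -1) (hper : ∀ k, u (k + t) = u k)
    (hm : 0 < gsum u t) :
    (((Finset.range t).filter
      (fun r => ∀ s < t, (∑ j ∈ Finset.Ico (r+s) (r+t), u j) ≠ 0)).card : ℤ)
      = gsum u t := by
  have hcongr : ∀ r, ((∀ s < t, (∑ j ∈ Finset.Ico (r+s) (r+t), u j) ≠ 0) ↔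
      (∀ j ∈ Finset.Ico r (r+t), gsum u j < gsum u (r+t))) := by
    intro r
    have hsum : ∀ s < t, ∑ j ∈ Finset.Ico (r+s) (r+t), u j
        = gsum u (r+t) - gsum u (r+s) := by
      intro s hs
      exact gsum_Ico u (by omega)
    constructor
    · intro hne j hj
      rw [Finset.mem_Ico] at hj
      have hneq : ∀ j' ∈ Finset.Ico r (r+t), gsum u j' ≠ gsum u (r+t) := by
        intro j' hj'
        rw [Finset.mem_Ico] at hj'
        have hs := hne (j' - r) (by omega)
        rw [hsum (j' - r) (by omega)] at hs
        have : r + (j' - r) = j' := by omega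
        rw [this] at hs
        intro heq
        omega
      by_contra hge
      push_neg at hge
      have hgr : gsum u (r+t) = gsum u r + gsum u t := gsum_periodic t u hper r
      have h1 : gsum u r ≤ gsum u (r+t) := by omega
      obtain ⟨k, hk1, hk2, hk3⟩ := discrete_ivt (gsum u) (gsum_steps u hu)
        (gsum u (r+t)) j r hj.1 h1 hge
      exact hneq k (by rw [Finset.mem_Ico]; omega) hk3
    · intro hlt s hs
      rw [hsum s hs]
      have := hlt (r+s) (by rw [Finset.mem_Ico]; omega)
      omega
  rw [Finset.filter_congr (fun r _ => hcongr r)]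
  rw [count_records t ht u hu hper hm t, mwin_t t ht u hper]
  ring

lemma cycle_count (t : ℕ) (ht : 0 < t) (u : ℕ → ℤ)
    (hu : ∀ k, u k = 1 ∨ u k = -1) (hper : ∀ k, u (k + t) = u k) :
    (((Finset.range t).filter
      (fun r => ∀ s < t, (∑ j ∈ Finset.Ico (r+s) (r+t), u j) ≠ 0)).card : ℤ)
      = |gsum u t| := by
  rcases lt_trichotomy (gsum u t) 0 with hm | hm | hm
  · -- apply to -u
    have hgneg : gsum (fun k => -(u k)) t = - gsum u t := by
      simp [gsum]
    have h := cycle_count_pos t ht (fun k => -(u k))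
      (fun k => by rcases hu k with h | h <;> simp [h])
      (fun k => by simp [hper k])
      (by rw [hgneg]; omega)
    have hfilter : ∀ r, ((∀ s < t, (∑ j ∈ Finset.Ico (r+s) (r+t), -(u j)) ≠ 0) ↔
        (∀ s < t, (∑ j ∈ Finset.Ico (r+s) (r+t), u j) ≠ 0)) := by
      intro r
      constructor <;> intro hh s hs <;> have := hh s hs <;>
        simp only [Finset.sum_neg_distrib] at * <;> omega
    rw [Finset.filter_congr (fun r _ => (hfilter r))] at h
    rw [h, hgneg, abs_of_neg hm]
  · rw [hm, abs_zero]
    norm_cast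
    rw [Finset.card_eq_zero, Finset.filter_eq_empty_iff]
    intro r _
    push_neg
    refine ⟨0, ht, ?_⟩
    rw [Nat.add_zero, gsum_Ico u (by omega), gsum_periodic t u hper r, hm]
    ring
  · rw [cycle_count_pos t ht u hu hper hm, abs_of_pos hm]

end FPAux

namespace FPAux

open Finset

variable {t : ℕ} {p : ℝ}

def xiR (b : Bool) : ℝ := if b then 1 else -1

noncomputable def wf (p : ℝ) (b : Bool) : ℝ := if b then p else 1 - p

noncomputable def wt (p : ℝ) (b : Fin t → Bool) : ℝ := ∏ i, wf p (b i)

lemma wt_nonneg (hp0 : 0 ≤ p) (hp1 : p ≤ 1) (b : Fin t → Bool) : 0 ≤ wt p b :=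
  Finset.prod_nonneg (fun i _ => by unfold wf; split <;> linarith)

lemma sum_pi_prod (f : Fin t → Bool → ℝ) :
    ∑ b : Fin t → Bool, ∏ i, f i (b i) = ∏ i, (f i true + f i false) := by
  rw [← Fintype.piFinset_univ, ← Finset.prod_univ_sum]
  congr 1
  ext i
  simp [Fintype.sum_bool]

lemma sum_wt : ∑ b : Fin t → Bool, wt p b = 1 := by
  rw [show (fun b : Fin t → Bool => wt p b) = fun b => ∏ i, wf p (b i) from rfl]
  rw [sum_pi_prod (fun _ x => wf p x)]
  simp [wf]

lemma sum_wt_pair (j k : Fin t) :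
    ∑ b : Fin t → Bool, wt p b * (xiR (b j) * xiR (b k))
      = if j = k then 1 else (2*p - 1)^2 := by
  have hrw : ∀ b : Fin t → Bool, wt p b * (xiR (b j) * xiR (b k))
      = ∏ i, (wf p (b i) * ((if i = j then xiR (b i) else 1) *
          (if i = k then xiR (b i) else 1))) := by
    intro b
    rw [Finset.prod_mul_distrib, Finset.prod_mul_distrib]
    rw [Finset.prod_ite_eq' Finset.univ j (fun i => xiR (b i)),
        Finset.prod_ite_eq' Finset.univ k (fun i => xiR (b i))]
    simp [wt]
  simp_rw [hrw]
  rw [sum_pi_prod (fun i x => wf p x * ((if i = j then xiR x else 1) *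
    (if i = k then xiR x else 1)))]
  have hfac : ∀ i : Fin t, (wf p true * ((if i = j then xiR true else 1) *
      (if i = k then xiR true else 1)) + wf p false * ((if i = j then xiR false else 1) *
      (if i = k then xiR false else 1)))
      = if i = j then (if i = k then 1 else 2*p - 1)
        else (if i = k then 2*p - 1 else 1) := by
    intro i
    by_cases h1 : i = j
    · subst h1
      by_cases h2 : i = k
      · subst h2
        simp only [wf, xiR]
        norm_num
      · simp only [wf, xiR, if_pos rfl, if_neg h2]
        norm_num
        ring
    · by_cases h2 : i = k
      · subst h2
        simp only [wf, xiR, if_neg h1, if_pos rfl]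
        norm_num
        ring
      · simp only [wf, xiR, if_neg h1, if_neg h2]
        norm_num
  simp_rw [hfac]
  by_cases hjk : j = k
  · subst hjk
    rw [if_pos rfl]
    apply Finset.prod_eq_one
    intro i _
    by_cases h : i = j <;> simp [h]
  · rw [if_neg hjk]
    rw [← Finset.mul_prod_erase Finset.univ _ (Finset.mem_univ j)]
    rw [if_pos rfl, if_neg hjk]
    rw [← Finset.mul_prod_erase (Finset.univ.erase j) _
      (Finset.mem_erase.mpr ⟨fun h => hjk h.symm, Finset.mem_univ k⟩)]
    rw [if_neg (fun h => hjk h.symm), if_pos rfl]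
    rw [Finset.prod_eq_one]
    · ring
    · intro i hi
      rw [Finset.mem_erase, Finset.mem_erase] at hi
      rw [if_neg hi.2.1, if_neg hi.1]

lemma sum_wt_single (j : Fin t) :
    ∑ b : Fin t → Bool, wt p b * xiR (b j) = 2*p - 1 := by
  have hrw : ∀ b : Fin t → Bool, wt p b * xiR (b j)
      = ∏ i, (wf p (b i) * (if i = j then xiR (b i) else 1)) := by
    intro b
    rw [Finset.prod_mul_distrib, Finset.prod_ite_eq' Finset.univ j (fun i => xiR (b i))]
    simp [wt]
  simp_rw [hrw]
  rw [sum_pi_prod (fun i x => wf p x * (if i = j then xiR x else 1))]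
  have hfac : ∀ i : Fin t, (wf p true * (if i = j then xiR true else 1) +
      wf p false * (if i = j then xiR false else 1)) = if i = j then 2*p - 1 else 1 := by
    intro i
    by_cases h : i = j
    · subst h
      simp only [wf, xiR, if_pos rfl]
      norm_num
      ring
    · simp only [wf, xiR, if_neg h]
      norm_num
  simp_rw [hfac]
  rw [Finset.prod_ite_eq' Finset.univ j (fun _ => 2*p - 1), if_pos (Finset.mem_univ j)]

end FPAux

namespace FPAux

open Finset

variable {t : ℕ} {p : ℝ}

noncomputable def Sb (b : Fin t → Bool) : ℝ := ∑ i, xiR (b i)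

lemma sum_wt_S : ∑ b : Fin t → Bool, wt p b * Sb b = t * (2*p - 1) := by
  unfold Sb
  simp_rw [Finset.mul_sum]
  rw [Finset.sum_comm]
  rw [Finset.sum_congr rfl (fun j _ => sum_wt_single j)]
  simp [mul_comm]
  ring

lemma sum_wt_S_sq :
    ∑ b : Fin t → Bool, wt p b * (Sb b)^2 = t + (t^2 - t) * (2*p - 1)^2 := by
  have hSq : ∀ b : Fin t → Bool, (Sb b)^2 = ∑ j, ∑ k, xiR (b j) * xiR (b k) := by
    intro b
    rw [sq, Sb, Finset.sum_mul_sum]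
  simp_rw [hSq, Finset.mul_sum]
  rw [Finset.sum_comm]
  have : ∀ j : Fin t, ∑ b : Fin t → Bool, ∑ k, wt p b * (xiR (b j) * xiR (b k))
      = 1 + (t - 1) * (2*p-1)^2 := by
    intro j
    rw [Finset.sum_comm]
    rw [Finset.sum_congr rfl (fun k _ => sum_wt_pair j k)]
    have hsplit : ∀ k : Fin t, (if j = k then (1:ℝ) else (2*p-1)^2)
        = (2*p-1)^2 + (if j = k then 1 - (2*p-1)^2 else 0) := by
      intro k
      by_cases h : j = k <;> simp [h]
    rw [Finset.sum_congr rfl (fun k _ => hsplit k), Finset.sum_add_distrib,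
      Finset.sum_ite_eq Finset.univ j (fun _ => 1 - (2*p-1)^2)]
    simp [Finset.card_univ]
    ring
  rw [Finset.sum_congr rfl (fun j (_ : j ∈ Finset.univ) => this j)]
  simp [Finset.card_univ]
  ring

lemma sum_wt_dev_sq :
    ∑ b : Fin t → Bool, wt p b * (Sb b - t*(2*p-1))^2 = t * (1 - (2*p - 1)^2) := by
  have h1 : ∑ b : Fin t → Bool, wt p b = 1 := sum_wt
  have h2 : ∑ b : Fin t → Bool, wt p b * Sb b = t * (2*p - 1) := sum_wt_S
  have h3 : ∑ b : Fin t → Bool, wt p b * (Sb b)^2 = t + (t^2 - t) * (2*p - 1)^2 :=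
    sum_wt_S_sq
  have hexp : ∀ b : Fin t → Bool, wt p b * (Sb b - t*(2*p-1))^2
      = wt p b * (Sb b)^2 - (2*(t*(2*p-1))) * (wt p b * Sb b)
        + (t*(2*p-1))^2 * wt p b := fun b => by ring
  rw [Finset.sum_congr rfl (fun b _ => hexp b), Finset.sum_add_distrib,
    Finset.sum_sub_distrib, ← Finset.mul_sum, ← Finset.mul_sum, h1, h2, h3]
  ring

lemma sum_wt_absdev_le (hp0 : 0 ≤ p) (hp1 : p ≤ 1) :
    ∑ b : Fin t → Bool, wt p b * |Sb b - t*(2*p-1)| ≤ Real.sqrt t := by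
  have key : ∀ b : Fin t → Bool, wt p b * |Sb b - t*(2*p-1)|
      = Real.sqrt (wt p b) * Real.sqrt (wt p b * (Sb b - t*(2*p-1))^2) := by
    intro b
    rw [Real.sqrt_mul (wt_nonneg hp0 hp1 b), Real.sqrt_sq_eq_abs,
      ← mul_assoc, Real.mul_self_sqrt (wt_nonneg hp0 hp1 b)]
  rw [Finset.sum_congr rfl (fun b _ => key b)]
  have hcs := Real.sum_sqrt_mul_sqrt_le (Finset.univ : Finset (Fin t → Bool))
    (f := fun b => wt p b) (g := fun b => wt p b * (Sb b - t*(2*p-1))^2)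
    (fun b => wt_nonneg hp0 hp1 b)
    (fun b => mul_nonneg (wt_nonneg hp0 hp1 b) (sq_nonneg _))
  refine hcs.trans ?_
  rw [sum_wt, sum_wt_dev_sq, Real.sqrt_one, one_mul]
  apply Real.sqrt_le_sqrt
  nlinarith [sq_nonneg (2*p-1), Nat.cast_nonneg (α := ℝ) t]

end FPAux
namespace FPAux

open Finset

def xiZ (b : Bool) : ℤ := if b then 1 else -1

def ubz (t : ℕ) (b : Fin t → Bool) (j : ℕ) : ℤ :=
  if h : j % t < t then xiZ (b ⟨j % t, h⟩) else 1

lemma ubz_pm (t : ℕ) (b : Fin t → Bool) (k : ℕ) : ubz t b k = 1 ∨ ubz t b k = -1 := by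
  unfold ubz xiZ
  split
  · split
    · left; rfl
    · right; rfl
  · left; rfl

lemma ubz_per (t : ℕ) (b : Fin t → Bool) (k : ℕ) : ubz t b (k + t) = ubz t b k := by
  unfold ubz
  rw [Nat.add_mod_right]

lemma ubz_lt (t : ℕ) (b : Fin t → Bool) {j : ℕ} (hj : j < t) :
    ubz t b j = xiZ (b ⟨j, hj⟩) := by
  unfold ubz
  rw [dif_pos (by rw [Nat.mod_eq_of_lt hj]; exact hj)]
  have : (⟨j % t, by rw [Nat.mod_eq_of_lt hj]; exact hj⟩ : Fin t) = ⟨j, hj⟩ :=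
    Fin.ext (Nat.mod_eq_of_lt hj)
  rw [this]

def SZ {t : ℕ} (b : Fin t → Bool) : ℤ := ∑ i, xiZ (b i)

lemma gsum_ubz (t : ℕ) (b : Fin t → Bool) : gsum (ubz t b) t = SZ b := by
  rw [gsum, SZ, ← Fin.sum_univ_eq_sum_range (fun j => ubz t b j) t]
  apply Finset.sum_congr rfl
  intro i _
  rw [ubz_lt t b i.isLt]

variable {t : ℕ} {p : ℝ}

lemma shift_invariance (ht : 0 < t) (r : ℕ) (hr : r < t) :
    ∑ b ∈ Finset.univ.filter
      (fun b : Fin t → Bool => ∀ s < t, (∑ j ∈ Finset.Ico (r+s) (r+t), ubz t b j) ≠ 0), wt p b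
    = ∑ b ∈ Finset.univ.filter
      (fun b : Fin t → Bool => ∀ s < t, (∑ j ∈ Finset.Ico s t, ubz t b j) ≠ 0), wt p b := by
  haveI : NeZero t := ⟨by omega⟩
  set e : Equiv.Perm (Fin t) := Equiv.addRight (⟨r, hr⟩ : Fin t) with he
  have hub : ∀ (b : Fin t → Bool) (j : ℕ), ubz t (b ∘ e) j = ubz t b (j + r) := by
    intro b j
    have h1 : j % t < t := Nat.mod_lt _ ht
    have h2 : (j + r) % t < t := Nat.mod_lt _ ht
    rw [show ubz t (b ∘ e) j = xiZ ((b ∘ e) ⟨j % t, h1⟩) from dif_pos h1,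
        show ubz t b (j + r) = xiZ (b ⟨(j + r) % t, h2⟩) from dif_pos h2]
    congr 1
    show b (⟨j % t, h1⟩ + ⟨r, hr⟩) = b ⟨(j + r) % t, h2⟩
    congr 1
    apply Fin.ext
    simp only [Fin.add_def]
    conv_rhs => rw [← Nat.mod_add_mod]
  have hsum : ∀ (b : Fin t → Bool) (s : ℕ), s < t →
      (∑ j ∈ Finset.Ico s t, ubz t (b ∘ e) j) = ∑ j ∈ Finset.Ico (r+s) (r+t), ubz t b j := by
    intro b s hs
    rw [Finset.sum_congr rfl (fun j _ => hub b j)]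
    have hmap := Finset.sum_map (Finset.Ico s t) (addRightEmbedding r) (ubz t b)
    rw [Finset.map_add_right_Ico] at hmap
    rw [show r + s = s + r by omega, show r + t = t + r by omega, hmap]
    apply Finset.sum_congr rfl
    intro j _
    rfl
  refine Finset.sum_equiv (Equiv.arrowCongr e.symm (Equiv.refl Bool)) ?_ ?_
  · intro b
    simp only [Finset.mem_filter, Finset.mem_univ, true_and]
    have harr : (Equiv.arrowCongr e.symm (Equiv.refl Bool)) b = b ∘ e := by
      ext i; simp [Equiv.arrowCongr]
    rw [harr]
    constructor
    · intro h s hs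
      rw [hsum b s hs]
      exact h s hs
    · intro h s hs
      rw [← hsum b s hs]
      exact h s hs
  · intro b _
    have harr : (Equiv.arrowCongr e.symm (Equiv.refl Bool)) b = b ∘ e := by
      ext i; simp [Equiv.arrowCongr]
    rw [harr]
    unfold wt
    exact (Equiv.prod_comp e (fun i => wf p (b i))).symm

end FPAux
namespace FPAux

open Finset

variable {t : ℕ} {p : ℝ}

lemma SZ_cast (b : Fin t → Bool) : ((SZ b : ℤ) : ℝ) = Sb b := by
  unfold SZ Sb
  push_cast
  apply Finset.sum_congr rfl
  intro i _
  cases hbi : b i <;> simp [xiZ, xiR]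

lemma t_mul_A (ht : 0 < t) :
    (t : ℝ) * (∑ b ∈ Finset.univ.filter
      (fun b : Fin t → Bool => ∀ s < t, (∑ j ∈ Finset.Ico s t, ubz t b j) ≠ 0), wt p b)
    = ∑ b : Fin t → Bool, wt p b * |Sb b| := by
  set A := ∑ b ∈ Finset.univ.filter
      (fun b : Fin t → Bool => ∀ s < t, (∑ j ∈ Finset.Ico s t, ubz t b j) ≠ 0), wt p b with hA
  have h1 : (t : ℝ) * A = ∑ r ∈ Finset.range t, A := by
    rw [Finset.sum_const, Finset.card_range, nsmul_eq_mul]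
  rw [h1]
  have h2 : ∀ r ∈ Finset.range t, A = ∑ b ∈ Finset.univ.filter
      (fun b : Fin t → Bool => ∀ s < t, (∑ j ∈ Finset.Ico (r+s) (r+t), ubz t b j) ≠ 0),
      wt p b := by
    intro r hr
    rw [Finset.mem_range] at hr
    rw [hA, ← shift_invariance ht r hr]
  rw [Finset.sum_congr rfl h2]
  simp_rw [Finset.sum_filter]
  rw [Finset.sum_comm]
  apply Finset.sum_congr rfl
  intro b _
  have h3 : ∑ r ∈ Finset.range t,
      (if ∀ s < t, (∑ j ∈ Finset.Ico (r+s) (r+t), ubz t b j) ≠ 0 then wt p b else 0)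
      = ((Finset.range t).filter
        (fun r => ∀ s < t, (∑ j ∈ Finset.Ico (r+s) (r+t), ubz t b j) ≠ 0)).card
        * wt p b := by
    rw [← Finset.sum_filter, Finset.sum_const, nsmul_eq_mul]
  rw [h3]
  have h4 := cycle_count t ht (ubz t b) (ubz_pm t b) (ubz_per t b)
  rw [gsum_ubz] at h4
  have h5 : (((Finset.range t).filter
      (fun r => ∀ s < t, (∑ j ∈ Finset.Ico (r+s) (r+t), ubz t b j) ≠ 0)).card : ℝ)
      = |Sb b| := by
    have h6 := congrArg (fun z : ℤ => (z : ℝ)) h4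
    push_cast at h6
    rw [h6, SZ_cast]
  rw [h5, mul_comm]

lemma main_estimate (hp0 : 0 ≤ p) (hp : p ≤ 1/2) (ht : 0 < t) :
    |(∑ b ∈ Finset.univ.filter
      (fun b : Fin t → Bool => ∀ s < t, (∑ j ∈ Finset.Ico s t, ubz t b j) ≠ 0), wt p b)
      - (1 - 2*p)| ≤ Real.sqrt t / t := by
  have hp1 : p ≤ 1 := by linarith
  set A := ∑ b ∈ Finset.univ.filter
      (fun b : Fin t → Bool => ∀ s < t, (∑ j ∈ Finset.Ico s t, ubz t b j) ≠ 0), wt p b with hA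
  have htR : (0:ℝ) < t := by exact_mod_cast ht
  have key : |(t:ℝ) * A - t * (1 - 2*p)| ≤ Real.sqrt t := by
    have h1 : (t:ℝ) * A = ∑ b : Fin t → Bool, wt p b * |Sb b| := t_mul_A ht
    have h2 : (t:ℝ) * (1 - 2*p) = ∑ b : Fin t → Bool, wt p b * |(t:ℝ) * (2*p-1)| := by
      rw [← Finset.sum_mul, sum_wt, one_mul, abs_mul, abs_of_nonneg htR.le,
        abs_of_nonpos (by linarith : 2*p - 1 ≤ 0)]
      ring
    rw [h1, h2, ← Finset.sum_sub_distrib]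
    have h3 : ∀ b : Fin t → Bool,
        wt p b * |Sb b| - wt p b * |(t:ℝ) * (2*p-1)|
        = wt p b * (|Sb b| - |(t:ℝ) * (2*p-1)|) := fun b => by ring
    rw [Finset.sum_congr rfl (fun b _ => h3 b)]
    calc |∑ b : Fin t → Bool, wt p b * (|Sb b| - |(t:ℝ) * (2*p-1)|)|
        ≤ ∑ b : Fin t → Bool, |wt p b * (|Sb b| - |(t:ℝ) * (2*p-1)|)| :=
          Finset.abs_sum_le_sum_abs _ _
      _ ≤ ∑ b : Fin t → Bool, wt p b * |Sb b - t * (2*p-1)| := by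
          apply Finset.sum_le_sum
          intro b _
          rw [abs_mul, abs_of_nonneg (wt_nonneg hp0 hp1 b)]
          apply mul_le_mul_of_nonneg_left _ (wt_nonneg hp0 hp1 b)
          exact abs_abs_sub_abs_le_abs_sub _ _
      _ ≤ Real.sqrt t := sum_wt_absdev_le hp0 hp1
  have hfinal : |A - (1 - 2*p)| * t = |(t:ℝ) * A - t * (1 - 2*p)| := by
    rw [show (t:ℝ) * A - t * (1 - 2*p) = (A - (1 - 2*p)) * t by ring, abs_mul,
      abs_of_nonneg htR.le]
  rw [le_div_iff₀ htR, hfinal]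
  exact key

end FPAux

namespace FPAux

open MeasureTheory ProbabilityTheory Filter Finset

lemma measure_atom {Ω : Type*} [MeasurableSpace Ω] (μ : Measure Ω) [IsProbabilityMeasure μ]
    (p : ℝ) (N : ℕ → Ω → ℤ)
    (hNmeas : ∀ i, Measurable (N i))
    (hNindep : iIndepFun N μ)
    (hNval : ∀ i ω, N i ω = 1 ∨ N i ω = -1)
    (hNdist : ∀ i, (μ {ω | N i ω = 1}).toReal = p)
    (t : ℕ) (b : Fin t → Bool) :
    (μ {ω | ∀ i : Fin t, N i ω = xiZ (b i)}).toReal = wt p b := by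
  classical
  set sets : ℕ → Set ℤ := fun j => if h : j < t then {xiZ (b ⟨j, h⟩)} else Set.univ with hsets
  have hmeas_sets : ∀ j ∈ Finset.range t, MeasurableSet (sets j) := by
    intro j _
    by_cases h : j < t <;> simp [hsets, h]
  have hinter := hNindep.measure_inter_preimage_eq_mul (Finset.range t) hmeas_sets
  have hset_eq : (⋂ j ∈ Finset.range t, N j ⁻¹' sets j)
      = {ω | ∀ i : Fin t, N i ω = xiZ (b i)} := by
    ext ω
    simp only [Set.mem_iInter, Finset.mem_range, Set.mem_preimage, Set.mem_setOf_eq]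
    constructor
    · intro h i
      have h2 := h i.val i.isLt
      rw [hsets] at h2
      simp only [dif_pos i.isLt] at h2
      rw [Set.mem_singleton_iff] at h2
      exact h2
    · intro h j hj
      rw [hsets]
      simp only [dif_pos hj]
      rw [Set.mem_singleton_iff]
      exact h ⟨j, hj⟩
  rw [hset_eq] at hinter
  rw [hinter, ENNReal.toReal_prod]
  have hprod : ∏ j ∈ Finset.range t, (μ (N j ⁻¹' sets j)).toReal
      = ∏ i : Fin t, (μ (N i.val ⁻¹' sets i.val)).toReal :=
    (Fin.prod_univ_eq_prod_range (fun j => (μ (N j ⁻¹' sets j)).toReal) t).symm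
  rw [hprod]
  unfold wt
  apply Finset.prod_congr rfl
  intro i _
  have hsi : sets i.val = {xiZ (b i)} := by
    rw [hsets]
    simp only [dif_pos i.isLt]
  rw [hsi]
  have hone : (μ (N i.val ⁻¹' {(1:ℤ)})).toReal = p := by
    have hseq : N i.val ⁻¹' {(1:ℤ)} = {ω | N i.val ω = 1} := by
      ext ω; simp
    rw [hseq, hNdist]
  have hms : MeasurableSet (N i.val ⁻¹' {(1:ℤ)}) :=
    hNmeas i.val (measurableSet_singleton 1)
  cases hbi : b i
  · have hcompl : N i.val ⁻¹' {xiZ false} = (N i.val ⁻¹' {(1:ℤ)})ᶜ := by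
      ext ω
      simp only [Set.mem_preimage, Set.mem_singleton_iff, Set.mem_compl_iff, xiZ]
      rcases hNval i.val ω with h | h <;> simp [h]
    rw [hcompl, prob_compl_eq_one_sub hms,
      ENNReal.toReal_sub_of_le prob_le_one ENNReal.one_ne_top, ENNReal.toReal_one, hone]
    simp [wf]
  · simp only [xiZ, if_true, wf]
    exact hone

end FPAux
namespace FPAux

open MeasureTheory ProbabilityTheory Filter Finset

lemma measure_event {Ω : Type*} [MeasurableSpace Ω] (μ : Measure Ω) [IsProbabilityMeasure μ]
    (p : ℝ) (N : ℕ → Ω → ℤ)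
    (hNmeas : ∀ i, Measurable (N i))
    (hNindep : iIndepFun N μ)
    (hNval : ∀ i ω, N i ω = 1 ∨ N i ω = -1)
    (hNdist : ∀ i, (μ {ω | N i ω = 1}).toReal = p)
    (t : ℕ) :
    (μ {ω | ∀ s < t, (∑ j ∈ Finset.Ico s t, N j ω) ≠ 0}).toReal
    = ∑ b ∈ Finset.univ.filter
        (fun b : Fin t → Bool => ∀ s < t, (∑ j ∈ Finset.Ico s t, ubz t b j) ≠ 0), wt p b := by
  classical
  set bof : Ω → Fin t → Bool := fun ω i => decide (N i ω = 1) with hbofdef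
  have hbof : ∀ ω (i : Fin t), N i ω = xiZ (bof ω i) := by
    intro ω i
    rcases hNval i ω with h | h
    · simp [hbofdef, h, xiZ]
    · have hne : N i ω ≠ 1 := by rw [h]; norm_num
      simp [hbofdef, h, xiZ, hne]
  set atom : (Fin t → Bool) → Set Ω := fun b => {ω | ∀ i : Fin t, N i ω = xiZ (b i)}
    with hatomdef
  have hatom_mem : ∀ ω b, ω ∈ atom b ↔ bof ω = b := by
    intro ω b
    constructor
    · intro h
      funext i
      have h1 := h i
      have h2 := hbof ω i
      rw [h2] at h1
      cases hx : bof ω i <;> cases hy : b i <;> rw [hx, hy] at h1 <;>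
        simp [xiZ] at h1
    · intro h
      intro i
      rw [← h]
      exact hbof ω i
  have hsum_eq : ∀ ω b, bof ω = b → ∀ s < t,
      (∑ j ∈ Finset.Ico s t, N j ω) = ∑ j ∈ Finset.Ico s t, ubz t b j := by
    intro ω b hb s hs
    apply Finset.sum_congr rfl
    intro j hj
    rw [Finset.mem_Ico] at hj
    rw [ubz_lt t b hj.2, ← hb]
    exact hbof ω ⟨j, hj.2⟩
  have hevent : {ω | ∀ s < t, (∑ j ∈ Finset.Ico s t, N j ω) ≠ 0}
      = ⋃ b ∈ Finset.univ.filter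
        (fun b : Fin t → Bool => ∀ s < t, (∑ j ∈ Finset.Ico s t, ubz t b j) ≠ 0), atom b := by
    ext ω
    simp only [Set.mem_setOf_eq, Set.mem_iUnion, Finset.mem_filter, Finset.mem_univ,
      true_and, exists_prop]
    constructor
    · intro h
      refine ⟨bof ω, ?_, (hatom_mem ω (bof ω)).mpr rfl⟩
      intro s hs
      rw [← hsum_eq ω (bof ω) rfl s hs]
      exact h s hs
    · rintro ⟨b, hb, hmem⟩
      intro s hs
      rw [hsum_eq ω b ((hatom_mem ω b).mp hmem) s hs]
      exact hb s hs
  have hmeas_atom : ∀ b : Fin t → Bool, MeasurableSet (atom b) := by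
    intro b
    have : atom b = ⋂ i : Fin t, N i ⁻¹' {xiZ (b i)} := by
      ext ω
      simp [hatomdef]
    rw [this]
    exact MeasurableSet.iInter (fun i => hNmeas i (measurableSet_singleton _))
  have hdisj : Set.PairwiseDisjoint
      (↑(Finset.univ.filter
        (fun b : Fin t → Bool => ∀ s < t, (∑ j ∈ Finset.Ico s t, ubz t b j) ≠ 0)))
      atom := by
    intro b1 _ b2 _ hne
    rw [Function.onFun, Set.disjoint_left]
    intro ω h1 h2
    exact hne (((hatom_mem ω b1).mp h1).symm.trans ((hatom_mem ω b2).mp h2))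
  rw [hevent, measure_biUnion_finset hdisj (fun b _ => hmeas_atom b),
    ENNReal.toReal_sum (fun b _ => measure_ne_top μ _)]
  apply Finset.sum_congr rfl
  intro b _
  exact measure_atom μ p N hNmeas hNindep hNval hNdist t b

end FPAux

open MeasureTheory ProbabilityTheory Filter

/-- For a Bernoulli random walk with parameter `p`, `0 ≤ p ≤ 1/2`,
the first-passage probabilities converge:
`lim_{t→∞} P(W_t ≠ W_s for all 0 ≤ s < t) = 1 − 2 p`. -/
theorem first_passage_limit
    {Ω : Type*} [MeasurableSpace Ω] (μ : Measure Ω) [IsProbabilityMeasure μ]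
    (p : ℝ) (hp0 : 0 ≤ p) (hp : p ≤ 1 / 2)
    (N : ℕ → Ω → ℤ)
    (hNmeas : ∀ i, Measurable (N i))
    (hNindep : iIndepFun N μ)
    (hNval : ∀ i ω, N i ω = 1 ∨ N i ω = -1)
    (hNdist : ∀ i, (μ {ω | N i ω = 1}).toReal = p)
    (W : ℕ → Ω → ℤ)
    (hW : ∀ t ω, W t ω = ∑ i ∈ Finset.range t, N i ω) :
    Tendsto (fun t : ℕ => (μ {ω | ∀ s < t, W t ω ≠ W s ω}).toReal)
      atTop (nhds (1 - 2 * p)) := by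
  classical
  have hp' : p ≤ 1/2 := hp
  have heventeq : ∀ t : ℕ, {ω | ∀ s < t, W t ω ≠ W s ω}
      = {ω | ∀ s < t, (∑ j ∈ Finset.Ico s t, N j ω) ≠ 0} := by
    intro t
    ext ω
    simp only [Set.mem_setOf_eq]
    apply forall_congr'
    intro s
    apply imp_congr_right
    intro hs
    rw [hW, hW, ne_eq, ← sub_eq_zero.not]
    constructor
    · intro h h2
      apply h
      rw [Finset.sum_Ico_eq_sub _ (le_of_lt hs)] at h2
      linarith [h2]
    · intro h h2
      apply h
      rw [Finset.sum_Ico_eq_sub _ (le_of_lt hs)]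
      omega
  have hbound : ∀ t : ℕ, 0 < t →
      |(μ {ω | ∀ s < t, W t ω ≠ W s ω}).toReal - (1 - 2*p)| ≤ Real.sqrt t / t := by
    intro t ht
    rw [heventeq t,
      FPAux.measure_event μ p N hNmeas hNindep hNval hNdist t]
    exact FPAux.main_estimate hp0 hp' ht
  have hg : Tendsto (fun t : ℕ => Real.sqrt t / t) atTop (nhds 0) := by
    have h0 : Tendsto (fun x : ℝ => x ^ (-(1/2) : ℝ)) atTop (nhds 0) :=
      tendsto_rpow_neg_atTop (by norm_num)
    have h1 : Tendsto (fun t : ℕ => ((t:ℝ)) ^ (-(1/2) : ℝ)) atTop (nhds 0) :=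
      h0.comp tendsto_natCast_atTop_atTop
    apply h1.congr'
    filter_upwards [eventually_ge_atTop 1] with t ht
    have ht0 : (0:ℝ) < t := by
      have : (1:ℝ) ≤ t := by exact_mod_cast ht
      linarith
    rw [show (-(1/2) : ℝ) = 1/2 - 1 by norm_num, Real.rpow_sub ht0, Real.rpow_one,
      ← Real.sqrt_eq_rpow]
  have hzero : Tendsto (fun t : ℕ =>
      (μ {ω | ∀ s < t, W t ω ≠ W s ω}).toReal - (1 - 2*p)) atTop (nhds 0) := by
    apply squeeze_zero_norm' _ hg
    filter_upwards [eventually_ge_atTop 1] with t ht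
    exact hbound t ht
  have := hzero.add_const (1 - 2*p)
  simpa using this
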